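/- Let X be a uniformly convex real Banach space (or, more generally, assume δ_X(1) > 0 where δ_X is the modulus of convexity), let 0 < t ≤ 1, and let x, y be unit vectors with x Birkhoff-orthogonal to y. Then (‖x + t·y‖ − ‖t·x − y‖)/t ≤ (1 − 2t·δ_X(1))/t. -/

import Mathlib

/-- The modulus of convexity of a real normed space `X` at `ε`. -/
noncomputable def modulusConvexity (X : Type*) [NormedAddCommGroup X] [NormedSpace ℝ X]
    (ε : ℝ) : ℝ :=
  sInf {d : ℝ | ∃ x y : X, ‖x‖ ≤ 1 ∧ ‖y‖ ≤ 1 ∧ ε ≤ ‖x - y‖ ∧ d = 1 - ‖x + y‖ / 2}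

theorem stmt_16 {X : Type*} [NormedAddCommGroup X] [NormedSpace ℝ X] [CompleteSpace X]
    (hδ : 0 < modulusConvexity X 1)
    (t : ℝ) (ht0 : 0 < t) (ht1 : t ≤ 1) (x y : X)
    (hx : ‖x‖ = 1) (hy : ‖y‖ = 1) (hB : ∀ s : ℝ, ‖x + s • y‖ ≥ ‖x‖) :
    (‖x + t • y‖ - ‖t • x - y‖) / t ≤ (1 - 2 * t * modulusConvexity X 1) / t := by
  set δ := modulusConvexity X 1 with hδdef
  -- ‖x - y‖ ≥ 1
  have hxy1 : (1 : ℝ) ≤ ‖x - y‖ := by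
    have := hB (-1)
    simpa [hx, sub_eq_add_neg] using this
  -- δ ≤ 1 - ‖x+y‖/2
  have hmem : (1 - ‖x + y‖ / 2) ∈
      {d : ℝ | ∃ a b : X, ‖a‖ ≤ 1 ∧ ‖b‖ ≤ 1 ∧ (1:ℝ) ≤ ‖a - b‖ ∧ d = 1 - ‖a + b‖ / 2} :=
    ⟨x, y, le_of_eq hx, le_of_eq hy, hxy1, rfl⟩
  have hbdd : BddBelow {d : ℝ | ∃ a b : X, ‖a‖ ≤ 1 ∧ ‖b‖ ≤ 1 ∧ (1:ℝ) ≤ ‖a - b‖ ∧ d = 1 - ‖a + b‖ / 2} := by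
    refine ⟨0, ?_⟩
    rintro d ⟨a, b, ha, hb, _, rfl⟩
    have : ‖a + b‖ ≤ 2 := (norm_add_le a b).trans (by linarith)
    linarith
  have hδle : δ ≤ 1 - ‖x + y‖ / 2 := csInf_le hbdd hmem
  -- ‖x + y‖ ≤ 2 (1 - δ)
  have hsum : ‖x + y‖ ≤ 2 * (1 - δ) := by linarith
  -- ‖x + t y‖ ≤ t ‖x + y‖ + (1 - t)
  have h1 : ‖x + t • y‖ ≤ t * ‖x + y‖ + (1 - t) := by
    have heq : x + t • y = t • (x + y) + (1 - t) • x := by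
      rw [smul_add, sub_smul, one_smul]; abel
    calc ‖x + t • y‖ = ‖t • (x + y) + (1 - t) • x‖ := by rw [heq]
      _ ≤ ‖t • (x + y)‖ + ‖(1 - t) • x‖ := norm_add_le _ _
      _ = t * ‖x + y‖ + (1 - t) := by
          rw [norm_smul, norm_smul, hx, Real.norm_of_nonneg ht0.le,
            Real.norm_of_nonneg (by linarith)]; ring
  -- ‖t x - y‖ ≥ t
  have h2 : t ≤ ‖t • x - y‖ := by
    have := hB (-(1/t))
    have h' : (1:ℝ) ≤ ‖x - (1/t) • y‖ := by
      simpa [hx, sub_eq_add_neg, neg_smul] using this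
    have : t * 1 ≤ t * ‖x - (1/t) • y‖ := by
      exact mul_le_mul_of_nonneg_left h' ht0.le
    calc t = t * 1 := (mul_one t).symm
      _ ≤ t * ‖x - (1/t) • y‖ := this
      _ = ‖t • (x - (1/t) • y)‖ := by rw [norm_smul, Real.norm_of_nonneg ht0.le]
      _ = ‖t • x - y‖ := by
          congr 1
          rw [smul_sub, smul_smul]
          field_simp
          rw [one_smul]
  have hnum : ‖x + t • y‖ - ‖t • x - y‖ ≤ 1 - 2 * t * δ := by nlinarith
  gcongr
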